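/- Let C be a copula model satisfying M-neutrality for M = [m] ⊆ [n]. Then the probability measure P_C with CDF C satisfies: the coordinates in M are mutually independent, independent of the coordinates in [n]∖M, and each uniformly distributed; equivalently C(x) = (∏_{i∈M} xᵢ)·C̃((x_j)_{j∈[n]∖M}) where C̃ is an (n−m)-dimensional copula. -/

import Mathlib

open MeasureTheory Finset Function

noncomputable section

/-- The uniform probability measure on `[0,1] ⊆ ℝ`. -/
def unif01 : Measure ℝ := volume.restrict (Set.Icc 0 1)

/-- `q` is a probability mass function on `[w] = {1,…,w}`. -/
def IsPMF (w : ℕ) (q : ℕ → ℝ) : Prop :=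
  (∀ t, 0 ≤ q t) ∧ (∀ t, t ∉ Finset.Icc 1 w → q t = 0) ∧
    ∑ t ∈ Finset.Icc 1 w, q t = 1

/-- Collapse of adjacent bins `j` and `j+1`: `q^j(t) = q(t)·1{t ≤ j} + q(t+1)·1{t ≥ j}`. -/
def collapsePM (j : ℕ) (q : ℕ → ℝ) : ℕ → ℝ :=
  fun t => (if t ≤ j then q t else 0) + (if j ≤ t then q (t + 1) else 0)

/-- CDF of a pmf on `{1,…,w}`. -/
def pmfCDF (q : ℕ → ℝ) (t : ℕ) : ℝ := ∑ s ∈ Finset.Icc 1 t, q s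

/-- The product box `∏ᵢ {1,…,zᵢ}`. -/
def prodBox {n : ℕ} (z : Fin n → ℕ) : Finset (Fin n → ℕ) :=
  Fintype.piFinset fun i => Finset.Icc 1 (z i)

/-- `μ` is a joint pmf on `∏ᵢ {1,…,zᵢ}`. -/
def IsJointPMF {n : ℕ} (z : Fin n → ℕ) (μ : (Fin n → ℕ) → ℝ) : Prop :=
  (∀ s, 0 ≤ μ s) ∧ (∀ s, s ∉ prodBox z → μ s = 0) ∧ ∑ s ∈ prodBox z, μ s = 1

/-- The `i`-th marginal of a joint pmf. -/
def jointMarginal {n : ℕ} (z : Fin n → ℕ) (μ : (Fin n → ℕ) → ℝ) (i : Fin n) (t : ℕ) : ℝ :=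
  ∑ s ∈ (prodBox z).filter fun s => s i = t, μ s

/-- Joint CDF of a joint pmf. -/
def jointCDF {n : ℕ} (μ : (Fin n → ℕ) → ℝ) (s : Fin n → ℕ) : ℝ :=
  ∑ t ∈ Fintype.piFinset fun i => Finset.Icc 1 (s i), μ t

/-- A (candidate) model: assigns to each `z` and tuple of marginals a joint pmf. -/
abbrev Model (n : ℕ) := (z : Fin n → ℕ) → (Fin n → ℕ → ℝ) → (Fin n → ℕ) → ℝ

/-- `f` is a model: it returns a joint pmf whose marginals are the inputs. -/
def IsModel {n : ℕ} (f : Model n) : Prop :=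
  ∀ z p, (∀ i, IsPMF (z i) (p i)) →
    IsJointPMF z (f z p) ∧ ∀ i t, jointMarginal z (f z p) i t = p i t

/-- Invariant Aggregation: merging adjacent bins `j, j+1` of marginal `i`
does not affect the joint distribution over unaffected values. -/
def SatisfiesIA {n : ℕ} (f : Model n) : Prop :=
  ∀ z p, (∀ i, IsPMF (z i) (p i)) → ∀ i : Fin n, ∀ j ∈ Finset.Icc 1 (z i - 1),
    ∀ s ∈ prodBox (Function.update z i (z i - 1)),
      f (Function.update z i (z i - 1)) (Function.update p i (collapsePM j (p i))) s =
        (if s i ≤ j then f z p s else 0) +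
          (if j ≤ s i then f z p (Function.update s i (s i + 1)) else 0)

/-- A copula measure: a probability measure on `[0,1]^ι` with standard uniform marginals. -/
def IsCopulaMeasure {ι : Type*} [Fintype ι] (μ : Measure (ι → ℝ)) : Prop :=
  IsProbabilityMeasure μ ∧ ∀ i : ι, μ.map (fun t => t i) = unif01

/-- `C` is a copula: the CDF of a probability measure with uniform marginals. -/
def IsCopula {ι : Type*} [Fintype ι] (C : (ι → ℝ) → ℝ) : Prop :=
  ∃ μ : Measure (ι → ℝ), IsCopulaMeasure μ ∧
    ∀ x : ι → ℝ, (∀ i, x i ∈ Set.Icc (0 : ℝ) 1) →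
      (μ {t | ∀ i, t i ≤ x i}).toReal = C x

/-- `f` is a copula model with copula `C`: `F_{f(p)}(s) = C(F_{p₁}(s₁),…,F_{pₙ}(sₙ))`. -/
def IsCopulaModelWith {n : ℕ} (f : Model n) (C : (Fin n → ℝ) → ℝ) : Prop :=
  IsCopula C ∧ ∀ z p, (∀ i, IsPMF (z i) (p i)) → ∀ s ∈ prodBox z,
    jointCDF (f z p) s = C fun i => pmfCDF (p i) (s i)

/-- The binary distribution `b_t` on `{1,2}` with `b_t(1) = t`, `b_t(2) = 1 - t`. -/
def binPMF (t : ℝ) : ℕ → ℝ := fun s => if s = 1 then t else if s = 2 then 1 - t else 0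

/-- `σ` is a permutation of `{1,…,w}` (fixing everything else). -/
def PermOn (w : ℕ) (σ : Equiv.Perm ℕ) : Prop := ∀ t ∉ Finset.Icc 1 w, σ t = t

/-- `M`-neutrality for `M = {i : (i : ℕ) < m}`: relabelling the bins of a marginal in `M`
just relabels the joint distribution accordingly. -/
def MNeutral {n : ℕ} (f : Model n) (m : ℕ) : Prop :=
  ∀ z p, (∀ i, IsPMF (z i) (p i)) → ∀ i : Fin n, (i : ℕ) < m →
    ∀ σ : Equiv.Perm ℕ, PermOn (z i) σ → ∀ s ∈ prodBox z,
      f z (Function.update p i fun t => p i (σ t)) s =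
        f z p (Function.update s i (σ (s i)))

/-- A coupling of two pmfs `q₁` on `[w₁]`, `q₂` on `[w₂]`. -/
def IsCoupling (w₁ w₂ : ℕ) (q₁ q₂ : ℕ → ℝ) (μ : ℕ × ℕ → ℝ) : Prop :=
  (∀ a, 0 ≤ μ a) ∧ (∀ a, a ∉ (Finset.Icc 1 w₁) ×ˢ (Finset.Icc 1 w₂) → μ a = 0) ∧
    (∀ s, ∑ t ∈ Finset.Icc 1 w₂, μ (s, t) = q₁ s) ∧
    (∀ t, ∑ s ∈ Finset.Icc 1 w₁, μ (s, t) = q₂ t)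

/-- Diagonal mass of a coupling. -/
def diagMass (w₁ w₂ : ℕ) (μ : ℕ × ℕ → ℝ) : ℝ :=
  ∑ s ∈ Finset.Icc 1 (min w₁ w₂), μ (s, s)

/-- A maximal coupling: a coupling maximizing the diagonal mass. -/
def IsMaxCoupling (w₁ w₂ : ℕ) (q₁ q₂ : ℕ → ℝ) (μ : ℕ × ℕ → ℝ) : Prop :=
  IsCoupling w₁ w₂ q₁ q₂ μ ∧
    ∀ ν, IsCoupling w₁ w₂ q₁ q₂ ν → diagMass w₁ w₂ ν ≤ diagMass w₁ w₂ μ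


/- ### Auxiliary lemmas ### -/

lemma additive_seg (g : ℝ → ℝ)
    (hadd : ∀ a b : ℝ, 0 ≤ a → 0 ≤ b → a + b ≤ 1 → g (a + b) = g a + g b)
    (hnn : ∀ t : ℝ, 0 ≤ t → t ≤ 1 → 0 ≤ g t) :
    ∀ t, 0 ≤ t → t ≤ 1 → g t = t * g 1 := by
  have h0 : g 0 = 0 := by
    have := hadd 0 0 le_rfl le_rfl (by norm_num); simp at this; linarith
  have hmono : ∀ s t : ℝ, 0 ≤ s → s ≤ t → t ≤ 1 → g s ≤ g t := by
    intro s t hs hst ht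
    have h1 := hadd s (t - s) hs (by linarith) (by linarith)
    have h2 := hnn (t - s) (by linarith) (by linarith)
    have h3 : s + (t - s) = t := by ring
    rw [h3] at h1
    linarith
  have hmul : ∀ q : ℕ, 0 < q → ∀ k : ℕ, k ≤ q → g ((k : ℝ) / q) = (k : ℝ) * g (1 / q) := by
    intro q hq k
    induction k with
    | zero => simp [h0]
    | succ k ih =>
      intro hk
      have hk' : k ≤ q := Nat.le_of_succ_le hk
      have hq0 : (0:ℝ) < q := by exact_mod_cast hq
      have hsplit : ((k:ℝ) + 1) / q = (k:ℝ)/q + 1/q := by ring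
      have hb : (0:ℝ) ≤ (k:ℝ)/q := by positivity
      have hb2 : (0:ℝ) ≤ 1/q := by positivity
      have hle : (k:ℝ)/q + 1/q ≤ 1 := by
        rw [← add_div, div_le_one hq0]
        exact_mod_cast hk
      have := hadd ((k:ℝ)/q) (1/q) hb hb2 hle
      push_cast
      rw [hsplit, this, ih hk']
      ring
  have hg1 : 0 ≤ g 1 := hnn 1 zero_le_one le_rfl
  have hrat : ∀ q : ℕ, 0 < q → ∀ k : ℕ, k ≤ q → g ((k:ℝ)/q) = ((k:ℝ)/q) * g 1 := by
    intro q hq k hk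
    have hq0 : (0:ℝ) < q := by exact_mod_cast hq
    have h1 : g ((q:ℝ)/q) = (q:ℝ) * g (1/q) := hmul q hq q le_rfl
    rw [div_self hq0.ne'] at h1
    have hg1q : g (1/q) = g 1 / q := by
      field_simp at h1 ⊢
      linarith
    rw [hmul q hq k hk, hg1q]
    ring
  intro t ht ht1
  have key : ∀ q : ℕ, 0 < q → |g t - t * g 1| ≤ g 1 / q := by
    intro q hq
    have hq0 : (0:ℝ) < q := by exact_mod_cast hq
    set k := ⌊t * q⌋₊ with hk
    have hk1 : (k:ℝ) ≤ t * q := Nat.floor_le (by positivity)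
    have hk2 : t * q < (k:ℝ) + 1 := Nat.lt_floor_add_one _
    have hkq : k ≤ q := by
      have : t * q ≤ (q:ℝ) := by nlinarith
      calc k = ⌊t * (q:ℝ)⌋₊ := rfl
        _ ≤ ⌊(q:ℝ)⌋₊ := Nat.floor_le_floor this
        _ = q := Nat.floor_natCast q
    have hlow : ((k:ℝ)/q) * g 1 ≤ g t := by
      rw [← hrat q hq k hkq]
      exact hmono _ _ (by positivity) (by rw [div_le_iff₀ hq0]; linarith) ht1
    have hup : g t ≤ (((k:ℝ)+1)/q) * g 1 := by
      by_cases hc : k + 1 ≤ q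
      · have : g t ≤ g (((k:ℝ)+1)/q) := by
          apply hmono _ _ ht (by rw [le_div_iff₀ hq0]; linarith)
          rw [div_le_one hq0]; exact_mod_cast hc
        have h2 := hrat q hq (k+1) hc
        push_cast at h2
        linarith [this, h2.le]
      · have h1 : g t ≤ g 1 := hmono t 1 ht ht1 le_rfl
        have h2 : (1:ℝ) ≤ ((k:ℝ)+1)/q := by
          rw [le_div_iff₀ hq0]
          have hqk : (q:ℝ) ≤ (k:ℝ)+1 := by exact_mod_cast Nat.le_succ_of_le (by omega)
          linarith
        nlinarith
    have htlow : ((k:ℝ)/q) ≤ t := by rw [div_le_iff₀ hq0]; linarith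
    have htup : t ≤ ((k:ℝ)+1)/q := by rw [le_div_iff₀ hq0]; linarith
    rw [abs_le]
    constructor
    · have : t * g 1 ≤ (((k:ℝ)+1)/q) * g 1 := by nlinarith
      have hdiff : (((k:ℝ)+1)/q) * g 1 - ((k:ℝ)/q) * g 1 = g 1 / q := by ring
      nlinarith
    · have : ((k:ℝ)/q) * g 1 ≤ t * g 1 := by nlinarith
      have hdiff : (((k:ℝ)+1)/q) * g 1 - ((k:ℝ)/q) * g 1 = g 1 / q := by ring
      nlinarith
  have habs : |g t - t * g 1| ≤ 0 := by
    apply le_of_forall_pos_le_add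
    intro ε hε
    rw [zero_add]
    obtain ⟨q, hq⟩ := exists_nat_gt (g 1 / ε)
    have hq1 : (0:ℝ) < (q:ℝ) + 1 := by positivity
    have : g 1 / ((q:ℕ)+1 : ℕ) ≤ ε := by
      push_cast
      rw [div_le_iff₀ hq1]
      have : g 1 < ε * q + ε := by
        rcases le_or_gt (g 1) 0 with h | h
        · have h9 : 0 ≤ ε * q := by positivity
          linarith
        · have := (div_lt_iff₀ hε).mp hq
          linarith
      linarith
    exact le_trans (key (q+1) (Nat.succ_pos q)) this
    
  have := abs_nonpos_iff.mp habs
  linarith [sub_eq_zero.mp this]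


def triPMF (a b : ℝ) : ℕ → ℝ :=
  fun s => if s = 1 then a else if s = 2 then b else if s = 3 then 1 - a - b else 0

lemma isPMF_bin {t : ℝ} (h0 : 0 ≤ t) (h1 : t ≤ 1) : IsPMF 2 (binPMF t) := by
  refine ⟨?_, ?_, ?_⟩
  · intro s; unfold binPMF; split_ifs <;> linarith
  · intro s hs
    simp only [Finset.mem_Icc, not_and_or, not_le] at hs
    unfold binPMF; split_ifs <;> first | rfl | (exfalso; omega)
  · rw [show Finset.Icc 1 2 = {1, 2} from rfl]
    simp [binPMF]

lemma isPMF_tri {a b : ℝ} (ha : 0 ≤ a) (hb : 0 ≤ b) (hab : a + b ≤ 1) :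
    IsPMF 3 (triPMF a b) := by
  refine ⟨?_, ?_, ?_⟩
  · intro s; unfold triPMF; split_ifs <;> linarith
  · intro s hs
    simp only [Finset.mem_Icc, not_and_or, not_le] at hs
    unfold triPMF; split_ifs <;> first | rfl | (exfalso; omega)
  · rw [show Finset.Icc 1 3 = {1, 2, 3} from rfl]
    norm_num [triPMF]

lemma pmfCDF_one (q : ℕ → ℝ) : pmfCDF q 1 = q 1 := by
  unfold pmfCDF; rw [Finset.Icc_self, Finset.sum_singleton]

lemma pmfCDF_two (q : ℕ → ℝ) : pmfCDF q 2 = q 1 + q 2 := by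
  unfold pmfCDF; rw [show Finset.Icc 1 2 = {1, 2} from rfl]; simp

lemma jointCDF_ones {n : ℕ} (g : (Fin n → ℕ) → ℝ) :
    jointCDF g (fun _ => 1) = g (fun _ => 1) := by
  unfold jointCDF
  have h : (Fintype.piFinset fun i : Fin n => Finset.Icc 1 ((fun _ => 1) i))
      = ({fun _ => 1} : Finset (Fin n → ℕ)) := by
    ext t
    simp only [Fintype.mem_piFinset, Finset.mem_Icc, Finset.mem_singleton, funext_iff]
    constructor
    · intro h j; exact le_antisymm (h j).2 (h j).1
    · intro h j; have := h j; omega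
  rw [h, Finset.sum_singleton]

lemma jointCDF_pair {n : ℕ} (g : (Fin n → ℕ) → ℝ) (i : Fin n) :
    jointCDF g (Function.update (fun _ => 1) i 2)
      = g (fun _ => 1) + g (Function.update (fun _ => 1) i 2) := by
  unfold jointCDF
  have h : (Fintype.piFinset fun j : Fin n => Finset.Icc 1 (Function.update (fun _ => 1) i 2 j))
      = ({fun _ => 1, Function.update (fun _ => 1) i 2} : Finset (Fin n → ℕ)) := by
    ext t
    simp only [Fintype.mem_piFinset, Finset.mem_Icc, Finset.mem_insert, Finset.mem_singleton]
    constructor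
    · intro h
      by_cases hti : t i = 1
      · left; funext j
        rcases eq_or_ne j i with rfl | hj
        · exact hti
        · have := h j; rw [Function.update_of_ne hj] at this; omega
      · right; funext j
        rcases eq_or_ne j i with rfl | hj
        · have := h j; rw [Function.update_self] at this ⊢; omega
        · have := h j; rw [Function.update_of_ne hj] at this ⊢; omega
    · rintro (rfl | rfl) <;> intro j <;>
        simp only [Function.update_apply] <;> split_ifs <;> omega
  rw [h, Finset.sum_pair]
  intro hcontra
  have := congrFun hcontra i
  rw [Function.update_self] at this
  omega

lemma key_add {n : ℕ} {m : ℕ} (f : Model n) (C : (Fin n → ℝ) → ℝ)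
    (hC2 : ∀ z p, (∀ i, IsPMF (z i) (p i)) → ∀ s ∈ prodBox z,
      jointCDF (f z p) s = C fun i => pmfCDF (p i) (s i))
    (hN : MNeutral f m) (x : Fin n → ℝ) (hx : ∀ j, x j ∈ Set.Icc (0:ℝ) 1)
    (i : Fin n) (him : (i:ℕ) < m) {a b : ℝ} (ha : 0 ≤ a) (hb : 0 ≤ b) (hab : a + b ≤ 1) :
    C (Function.update x i (a + b)) = C (Function.update x i a) + C (Function.update x i b) := by
  set z : Fin n → ℕ := Function.update (fun _ => 2) i 3 with hz
  set p : Fin n → ℕ → ℝ := Function.update (fun j => binPMF (x j)) i (triPMF a b) with hpdef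
  have hzi : z i = 3 := Function.update_self i 3 _
  have hpi : p i = triPMF a b := Function.update_self i _ _
  have hp : ∀ j, IsPMF (z j) (p j) := by
    intro j
    rcases eq_or_ne j i with rfl | hj
    · rw [hzi, hpi]; exact isPMF_tri ha hb hab
    · rw [show z j = 2 from Function.update_of_ne hj _ _,
        show p j = binPMF (x j) from Function.update_of_ne hj _ _]
      exact isPMF_bin (hx j).1 (hx j).2
  set s1 : Fin n → ℕ := fun _ => 1 with hs1def
  set s2 : Fin n → ℕ := Function.update s1 i 2 with hs2def
  have hs1j : ∀ j, s1 j = 1 := fun _ => rfl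
  have hs2i : s2 i = 2 := Function.update_self _ _ _
  have hs2j : ∀ j, j ≠ i → s2 j = 1 := fun j hj => Function.update_of_ne hj _ _
  have hs1 : s1 ∈ prodBox z := by
    simp only [prodBox, Fintype.mem_piFinset, Finset.mem_Icc]
    intro j
    rw [hs1j j]
    refine ⟨le_rfl, ?_⟩
    rcases eq_or_ne j i with rfl | hj
    · rw [hzi]; omega
    · rw [show z j = 2 from Function.update_of_ne hj _ _]; omega
  have hs2 : s2 ∈ prodBox z := by
    simp only [prodBox, Fintype.mem_piFinset, Finset.mem_Icc]
    intro j
    rcases eq_or_ne j i with rfl | hj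
    · rw [hzi, hs2i]; omega
    · rw [show z j = 2 from Function.update_of_ne hj _ _, hs2j j hj]
      omega
  have hσ : PermOn (z i) (Equiv.swap 1 2) := by
    intro t ht
    rw [hzi] at ht
    simp only [Finset.mem_Icc, not_and_or, not_le] at ht
    exact Equiv.swap_apply_of_ne_of_ne (by omega) (by omega)
  set p' : Fin n → ℕ → ℝ := Function.update p i (fun t => p i (Equiv.swap 1 2 t)) with hp'def
  have hp'i : p' i = fun t => triPMF a b (Equiv.swap 1 2 t) := by
    rw [hp'def, Function.update_self, hpi]
  have hswap : (fun t => triPMF a b (Equiv.swap 1 2 t)) = triPMF b a := by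
    funext t
    rcases eq_or_ne t 1 with rfl | h1
    · rw [Equiv.swap_apply_left]; rfl
    rcases eq_or_ne t 2 with rfl | h2
    · rw [Equiv.swap_apply_right]; rfl
    · rw [Equiv.swap_apply_of_ne_of_ne h1 h2]
      unfold triPMF; split_ifs <;> first | rfl | (exfalso; omega) | ring
  have hp' : ∀ j, IsPMF (z j) (p' j) := by
    intro j
    rcases eq_or_ne j i with rfl | hj
    · rw [hzi, hp'i, hswap]; exact isPMF_tri hb ha (by linarith)
    · rw [show p' j = p j from Function.update_of_ne hj _ _]; exact hp j
  have hneu := hN z p hp i him (Equiv.swap 1 2) hσ s1 hs1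
  have hs1i : s1 i = 1 := rfl
  have hneu' : f z p' s1 = f z p s2 := by
    rw [hp'def] at *
    rw [hneu, hs2def, hs1i]
    norm_num
  have E1 := hC2 z p hp s1 hs1
  have E2 := hC2 z p hp s2 hs2
  have E3 := hC2 z p' hp' s1 hs1
  have arg1 : (fun j => pmfCDF (p j) (s1 j)) = Function.update x i a := by
    funext j
    rcases eq_or_ne j i with rfl | hj
    · rw [hs1i, pmfCDF_one, hpi, Function.update_self]; rfl
    · rw [show s1 j = 1 from rfl, pmfCDF_one,
        show p j = binPMF (x j) from Function.update_of_ne hj _ _,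
        Function.update_of_ne hj]
      rfl
  have arg2 : (fun j => pmfCDF (p j) (s2 j)) = Function.update x i (a + b) := by
    funext j
    rcases eq_or_ne j i with rfl | hj
    · rw [show s2 j = 2 from Function.update_self _ _ _, pmfCDF_two, hpi, Function.update_self]
      rfl
    · rw [show s2 j = 1 from Function.update_of_ne hj _ _, pmfCDF_one,
        show p j = binPMF (x j) from Function.update_of_ne hj _ _, Function.update_of_ne hj]
      rfl
  have arg3 : (fun j => pmfCDF (p' j) (s1 j)) = Function.update x i b := by
    funext j
    rcases eq_or_ne j i with rfl | hj
    · rw [hs1i, pmfCDF_one, hp'i, hswap, Function.update_self]; rfl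
    · rw [show s1 j = 1 from rfl, pmfCDF_one,
        show p' j = p j from Function.update_of_ne hj _ _,
        show p j = binPMF (x j) from Function.update_of_ne hj _ _, Function.update_of_ne hj]
      rfl
  rw [arg1] at E1
  rw [arg2] at E2
  rw [arg3] at E3
  have j1 : jointCDF (f z p) s1 = f z p s1 := jointCDF_ones _
  have j3 : jointCDF (f z p') s1 = f z p' s1 := jointCDF_ones _
  have j2 : jointCDF (f z p) s2 = f z p s1 + f z p s2 := jointCDF_pair _ i
  rw [j1] at E1
  rw [j2] at E2
  rw [j3, hneu'] at E3
  linarith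

/-- a copula model satisfying `M`-neutrality (with `M = [m]`) has a copula
of the form `C(x) = (∏_{i∈M} xᵢ) · C̃((x_j)_{j∉M})` for an `(n−m)`-dimensional copula `C̃`. -/
theorem copulaModel_mNeutral_factorizes (n m : ℕ) (hm : m ≤ n) (f : Model n)
    (C : (Fin n → ℝ) → ℝ) (hf : IsModel f) (hC : IsCopulaModelWith f C)
    (hN : MNeutral f m) :
    ∃ Ct : ({i : Fin n // m ≤ (i : ℕ)} → ℝ) → ℝ, IsCopula Ct ∧
      ∀ x : Fin n → ℝ, (∀ i, x i ∈ Set.Icc (0 : ℝ) 1) →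
        C x = (∏ i ∈ Finset.univ.filter fun i : Fin n => (i : ℕ) < m, x i) *
          Ct fun j => x j.1 := by
  classical
  obtain ⟨hCop, hC2⟩ := hC
  obtain ⟨μ, ⟨hμprob, hμmarg⟩, hμcdf⟩ := hCop
  haveI := hμprob
  have hbox : ∀ y : Fin n → ℝ, (∀ j, y j ∈ Set.Icc (0:ℝ) 1) → 0 ≤ C y := by
    intro y hy
    rw [← hμcdf y hy]
    exact ENNReal.toReal_nonneg
  have hlin : ∀ (x : Fin n → ℝ), (∀ j, x j ∈ Set.Icc (0:ℝ) 1) → ∀ i : Fin n, (i:ℕ) < m →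
      ∀ t : ℝ, 0 ≤ t → t ≤ 1 →
      C (Function.update x i t) = t * C (Function.update x i 1) := by
    intro x hx i him
    have hup : ∀ t : ℝ, 0 ≤ t → t ≤ 1 → ∀ j, Function.update x i t j ∈ Set.Icc (0:ℝ) 1 := by
      intro t ht ht1 j
      rcases eq_or_ne j i with rfl | hj
      · rw [Function.update_self]; exact ⟨ht, ht1⟩
      · rw [Function.update_of_ne hj]; exact hx j
    exact additive_seg (fun t => C (Function.update x i t))
      (fun a b ha hb hab => key_add f C hC2 hN x hx i him ha hb hab)
      (fun t ht ht1 => hbox _ (hup t ht ht1))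
  refine ⟨fun y => C (fun j => if h : (j:ℕ) < m then 1 else y ⟨j, not_lt.mp h⟩), ?_, ?_⟩
  · -- `Ct` is a copula
    have hr : Measurable (fun t : Fin n → ℝ => fun j : {i : Fin n // m ≤ (i:ℕ)} => t j.1) :=
      measurable_pi_lambda _ fun j => measurable_pi_apply j.1
    refine ⟨μ.map (fun t (j : {i : Fin n // m ≤ (i:ℕ)}) => t j.1), ⟨?_, ?_⟩, ?_⟩
    · exact Measure.isProbabilityMeasure_map hr.aemeasurable
    · intro j
      rw [Measure.map_map (measurable_pi_apply j) hr]
      exact hμmarg j.1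
    · intro y hy
      set ext : Fin n → ℝ := fun j => if h : (j:ℕ) < m then 1 else y ⟨j, not_lt.mp h⟩
        with hextdef
      have hyext : ∀ i : Fin n, ext i ∈ Set.Icc (0:ℝ) 1 := by
        intro i
        rw [hextdef]
        dsimp only
        split_ifs
        · exact ⟨zero_le_one, le_rfl⟩
        · exact hy _
      show (Measure.map (fun (t : Fin n → ℝ) (j : {i : Fin n // m ≤ (i:ℕ)}) => t j.1) μ
        {t : {i : Fin n // m ≤ (i:ℕ)} → ℝ | ∀ j, t j ≤ y j}).toReal = C ext
      rw [← hμcdf ext hyext]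
      have hSmeas : MeasurableSet {t : {i : Fin n // m ≤ (i:ℕ)} → ℝ | ∀ j, t j ≤ y j} := by
        have hset : {t : {i : Fin n // m ≤ (i:ℕ)} → ℝ | ∀ j, t j ≤ y j}
            = Set.pi Set.univ (fun j => Set.Iic (y j)) := by
          ext t
          simp only [Set.mem_setOf_eq, Set.mem_univ_pi, Set.mem_Iic]
        rw [hset]
        exact MeasurableSet.univ_pi fun j => measurableSet_Iic
      rw [Measure.map_apply hr hSmeas]
      congr 1
      set A : Set (Fin n → ℝ) := {t | ∀ j : {i : Fin n // m ≤ (i:ℕ)}, t j.1 ≤ y j} with hA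
      set B : Set (Fin n → ℝ) := {t | ∀ i, t i ≤ ext i} with hB
      show μ A = μ B
      have hnulli : ∀ i : Fin n, μ {t : Fin n → ℝ | 1 < t i} = 0 := by
        intro i
        have h1 : {t : Fin n → ℝ | 1 < t i} = (fun t : Fin n → ℝ => t i) ⁻¹' Set.Ioi 1 := rfl
        rw [h1, ← Measure.map_apply (measurable_pi_apply i) measurableSet_Ioi, hμmarg i]
        unfold unif01
        rw [Measure.restrict_apply measurableSet_Ioi]
        have : Set.Ioi (1:ℝ) ∩ Set.Icc 0 1 = ∅ := by
          ext u
          simp only [Set.mem_inter_iff, Set.mem_Ioi, Set.mem_Icc, Set.mem_empty_iff_false,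
            iff_false, not_and, and_imp]
          intro h1u h0u
          intro h
          linarith
        rw [this]
        exact measure_empty
      have hBA : B ⊆ A := by
        intro t ht j
        have := ht j.1
        rw [hextdef] at this
        dsimp only at this
        rw [dif_neg (not_lt.mpr j.2)] at this
        exact this
      have hABnull : μ (A \ B) = 0 := by
        refine measure_mono_null ?_ (measure_iUnion_null hnulli)
        · intro t ⟨htA, htB⟩
          rw [hB] at htB
          simp only [Set.mem_setOf_eq, not_forall, not_le] at htB
          obtain ⟨i, hi⟩ := htB
          by_cases him : (i:ℕ) < m
          · have hexti : ext i = 1 := by rw [hextdef]; exact dif_pos him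
            rw [hexti] at hi
            exact Set.mem_iUnion.mpr ⟨i, hi⟩
          · exfalso
            have := htA ⟨i, not_lt.mp him⟩
            have hexti : ext i = y ⟨i, not_lt.mp him⟩ := by rw [hextdef]; exact dif_neg him
            rw [hexti] at hi
            exact absurd this (not_le.mpr hi)
      apply le_antisymm
      · calc μ A = μ (B ∪ (A \ B)) := by rw [Set.union_diff_cancel hBA]
          _ ≤ μ B + μ (A \ B) := measure_union_le _ _
          _ = μ B := by rw [hABnull, add_zero]
      · exact measure_mono hBA
  · -- factorization
    intro x hx
    have main : ∀ k : ℕ, k ≤ m →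
        C x = (∏ i ∈ Finset.univ.filter fun i : Fin n => (i:ℕ) < k, x i) *
          C (fun j : Fin n => if (j:ℕ) < k then 1 else x j) := by
      intro k
      induction k with
      | zero => intro _; simp
      | succ k ih =>
        intro hk1
        have hk : k ≤ m := Nat.le_of_succ_le hk1
        have hkn : k < n := lt_of_lt_of_le hk1 hm
        set i0 : Fin n := ⟨k, hkn⟩ with hi0
        set Y : Fin n → ℝ := fun j => if (j:ℕ) < k + 1 then 1 else x j with hY
        have hYbox : ∀ j, Y j ∈ Set.Icc (0:ℝ) 1 := by
          intro j
          rw [hY]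
          dsimp only
          split_ifs
          · exact ⟨zero_le_one, le_rfl⟩
          · exact hx j
        have hYi0 : Y i0 = 1 := by
          show (if k < k + 1 then (1:ℝ) else x i0) = 1
          rw [if_pos (Nat.lt_succ_self k)]
        have hupd1 : Function.update Y i0 1 = Y := by
          rw [← hYi0]; exact Function.update_eq_self i0 Y
        have hupd2 : Function.update Y i0 (x i0) = fun j : Fin n => if (j:ℕ) < k then 1 else x j := by
          funext j
          rcases eq_or_ne j i0 with rfl | hj
          · have h1 : ¬ ((i0:ℕ) < k) := by show ¬ k < k; omega
            rw [Function.update_self, if_neg h1]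
          · have hjk : (j:ℕ) ≠ k := by
              intro h
              exact hj (Fin.ext (show (j:ℕ) = (i0:ℕ) from h))
            rw [Function.update_of_ne hj, hY]
            dsimp only
            by_cases h : (j:ℕ) < k
            · rw [if_pos (by omega : (j:ℕ) < k + 1), if_pos h]
            · rw [if_neg (by omega : ¬ (j:ℕ) < k + 1), if_neg h]
        have hlinY := hlin Y hYbox i0 (show k < m by omega) (x i0) (hx i0).1 (hx i0).2
        rw [hupd1, hupd2] at hlinY
        have hins : (Finset.univ.filter fun i : Fin n => (i:ℕ) < k+1)
            = insert i0 (Finset.univ.filter fun i : Fin n => (i:ℕ) < k) := by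
          ext j
          simp only [Finset.mem_filter, Finset.mem_insert, Finset.mem_univ, true_and,
            Fin.ext_iff, hi0]
          omega
        have hnotmem : i0 ∉ Finset.univ.filter fun i : Fin n => (i:ℕ) < k := by
          simp [Finset.mem_filter, hi0]
        rw [ih hk, hlinY, hins, Finset.prod_insert hnotmem]
        ring
    have hmain := main m le_rfl
    rw [hmain]
    have harg : (fun j : Fin n => if (j:ℕ) < m then 1 else x j)
        = fun j : Fin n => if h : (j:ℕ) < m then 1
            else (fun j' : {i : Fin n // m ≤ (i:ℕ)} => x j'.1) ⟨j, not_lt.mp h⟩ := by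
      funext j
      by_cases h : (j:ℕ) < m
      · rw [if_pos h, dif_pos h]
      · rw [if_neg h, dif_neg h]
    rw [harg]
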